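/- Let n, k be coprime positive integers with k ≢ 2 (mod 4), and let G = G_{n,k} ≤ GL₂(k) be the group generated by g = diag(ω_n, ω_n^{-1}) and h = antidiag(ω_{2k}, ω_{2k}), where ω_m denotes a primitive m-th root of unity. Then |G| = 2nk and G has the presentation ⟨g, h | gⁿ = 1, h^{2k} = 1, hg = g^{n-1}h⟩. -/

import Mathlib

lemma Gnk_conj_alt {G : Type*} [Group G] (x y : G) (hxy : y * x * y⁻¹ = x⁻¹) (b c : ℤ) :
    y ^ b * x ^ c = x ^ c * y ^ b ∨ y ^ b * x ^ c = x ^ (-c) * y ^ b := by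
  have hB : y * x⁻¹ * y⁻¹ = x := by
    have := congrArg Inv.inv hxy
    simp only [mul_inv_rev, inv_inv] at this
    rw [← mul_assoc] at this
    exact this
  have hD : y⁻¹ * x⁻¹ * y = x := by
    rw [← hxy]; group
  have hC : y⁻¹ * x * y = x⁻¹ := by
    have := congrArg Inv.inv hD
    simp only [mul_inv_rev, inv_inv] at this
    rw [← mul_assoc] at this
    exact this
  have key : ∀ b : ℤ, y ^ b * x * y ^ (-b) = x ∨ y ^ b * x * y ^ (-b) = x⁻¹ := by
    intro b
    induction b using Int.induction_on with
    | zero => simp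
    | succ i ih =>
      have hstep : y ^ ((i:ℤ) + 1) * x * y ^ (-((i:ℤ) + 1)) =
          y * (y ^ (i:ℤ) * x * y ^ (-(i:ℤ))) * y⁻¹ := by group
      rw [hstep]
      rcases ih with ih | ih
      · rw [ih]; exact Or.inr hxy
      · rw [ih]; exact Or.inl hB
    | pred i ih =>
      have hstep : y ^ (-(i:ℤ) - 1) * x * y ^ (-(-(i:ℤ) - 1)) =
          y⁻¹ * (y ^ (-(i:ℤ)) * x * y ^ (-(-(i:ℤ)))) * y := by group
      rw [hstep]
      rcases ih with ih | ih
      · rw [ih]; exact Or.inr hC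
      · rw [ih]; exact Or.inl hD
  rcases key b with hb | hb
  · left
    have : y ^ b * x ^ c * y ^ (-b) = x ^ c := by
      calc y ^ b * x ^ c * y ^ (-b) = (y ^ b * x * (y ^ b)⁻¹) ^ c := by
            rw [conj_zpow]; rw [zpow_neg]
          _ = x ^ c := by rw [← zpow_neg y b, hb]
    calc y ^ b * x ^ c = (y ^ b * x ^ c * y ^ (-b)) * y ^ b := by group
      _ = x ^ c * y ^ b := by rw [this]
  · right
    have : y ^ b * x ^ c * y ^ (-b) = x ^ (-c) := by
      calc y ^ b * x ^ c * y ^ (-b) = (y ^ b * x * (y ^ b)⁻¹) ^ c := by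
            rw [conj_zpow]; rw [zpow_neg]
          _ = x ^ (-c) := by rw [← zpow_neg y b, hb, ← zpow_neg_one, ← zpow_mul]; ring_nf
    calc y ^ b * x ^ c = (y ^ b * x ^ c * y ^ (-b)) * y ^ b := by group
      _ = x ^ (-c) * y ^ b := by rw [this]

lemma Gnk_dpow {K : Type*} [CommRing K] (p q : K) (m : ℕ) :
    (!![p, 0; 0, q] : Matrix (Fin 2) (Fin 2) K) ^ m = !![p ^ m, 0; 0, q ^ m] := by
  induction m with
  | zero => simp [Matrix.one_fin_two]
  | succ m ih => rw [pow_succ, ih, Matrix.mul_fin_two]; simp [pow_succ]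

lemma Gnk_apow {K : Type*} [CommRing K] (s : K) (b : ℕ) :
    (!![0, s; s, 0] : Matrix (Fin 2) (Fin 2) K) ^ b =
      if Even b then !![s ^ b, 0; 0, s ^ b] else !![0, s ^ b; s ^ b, 0] := by
  induction b with
  | zero => simp [Matrix.one_fin_two]
  | succ b ih =>
    rw [pow_succ, ih]
    rcases Nat.even_or_odd b with hb | hb
    · have h1 : ¬ Even (b+1) := by simp [Nat.even_add_one, hb]
      simp only [if_pos hb, if_neg h1, Matrix.mul_fin_two]
      norm_num [pow_succ]
    · have h1 : Even (b+1) := by simpa [Nat.even_add_one, Nat.not_even_iff_odd] using hb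
      have h2 : ¬ Even b := by simpa [Nat.not_even_iff_odd] using hb
      simp only [if_neg h2, if_pos h1, Matrix.mul_fin_two]
      norm_num [pow_succ]

lemma Gnk_zpow_reduce {G : Type*} [Group G] (u : G) (m : ℕ) (hm : 0 < m) (h1 : u ^ m = 1)
    (a : ℤ) : u ^ a = u ^ (a % (m : ℤ)).toNat ∧ (a % (m : ℤ)).toNat < m := by
  have hm' : (m : ℤ) ≠ 0 := by exact_mod_cast hm.ne'
  have h0 : 0 ≤ a % (m : ℤ) := Int.emod_nonneg a hm'
  constructor
  · have : u ^ a = u ^ ((m : ℤ) * (a / m) + a % m) := by rw [Int.mul_ediv_add_emod]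
    rw [this, zpow_add, zpow_mul, zpow_natCast, h1, one_zpow, one_mul,
      ← zpow_natCast, Int.toNat_of_nonneg h0]
  · have := Int.emod_lt_of_pos a (by exact_mod_cast hm : (0:ℤ) < m)
    omega

lemma Gnk_root_dvd {K : Type*} [Field K] {ζ : K} {m : ℕ} (hζ : IsPrimitiveRoot ζ m)
    (hm : 0 < m) {i j : ℕ} (hij : i ≤ j) (hE : ζ ^ i = ζ ^ j) : m ∣ j - i := by
  have hz : ζ ≠ 0 := hζ.ne_zero hm.ne'
  have h1 : ζ ^ i * ζ ^ (j - i) = ζ ^ i * 1 := by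
    rw [← pow_add, Nat.add_sub_cancel' hij, ← hE, mul_one]
  exact (hζ.pow_eq_one_iff_dvd _).mp (mul_left_cancel₀ (pow_ne_zero i hz) h1)

lemma Gnk_neg_case {K : Type*} [Field K] [CharZero K] {ζ : K} {m : ℕ}
    (hζ : IsPrimitiveRoot ζ m) (hm : 0 < m) (hodd : ¬ 2 ∣ m) (a c : ℕ)
    (hE : ζ ^ a = - ζ ^ c) : False := by
  have hz : ζ ≠ 0 := hζ.ne_zero hm.ne'
  wlog hac : a ≤ c generalizing a c
  · exact this c a (by rw [hE]; ring) (le_of_not_ge hac)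
  have h2 : ζ ^ (2 * a) = ζ ^ (2 * c) := by
    rw [two_mul, two_mul, pow_add, pow_add, hE]; ring
  have hdvd : m ∣ 2 * c - 2 * a := Gnk_root_dvd hζ hm (by omega) h2
  have hdvd' : m ∣ 2 * (c - a) := by
    have h : 2 * c - 2 * a = 2 * (c - a) := by omega
    rwa [h] at hdvd
  have hco : Nat.Coprime m 2 := ((Nat.prime_two.coprime_iff_not_dvd).2 hodd).symm
  have h3 : ζ ^ (c - a) = 1 := (hζ.pow_eq_one_iff_dvd _).mpr (hco.dvd_of_dvd_mul_left hdvd')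
  have h4 : ζ ^ c = ζ ^ a := by
    rw [← Nat.add_sub_cancel' hac, pow_add, h3, mul_one]
  rw [h4] at hE
  exact pow_ne_zero a hz (CharZero.eq_neg_self_iff.mp hE)

lemma Gnk_half_neg_one {K : Type*} [Field K] {ζ : K} {k : ℕ} (hk : 0 < k)
    (hζ : IsPrimitiveRoot ζ (2 * k)) : ζ ^ k = -1 := by
  have h1 : (ζ ^ k) ^ 2 = 1 := by rw [← pow_mul, mul_comm, hζ.pow_eq_one]
  rcases sq_eq_one_iff.mp h1 with h | h
  · exact absurd h (hζ.pow_ne_one_of_pos_of_lt hk.ne' (by omega))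
  · exact h

lemma Gnk_exp_inj {K : Type*} [Field K] [CharZero K] {n k : ℕ} (hn : 0 < n) (hk : 0 < k)
    (hcop : Nat.Coprime n k) {ωn ω2k : K} (hωn : IsPrimitiveRoot ωn n)
    (hω2k : IsPrimitiveRoot ω2k (2 * k)) {a c b d : ℕ} (ha : a < n) (hc : c < n)
    (hb : b < 2 * k) (hd : d < 2 * k) (hpar : b % 2 = d % 2)
    (E1 : ωn ^ a * ω2k ^ b = ωn ^ c * ω2k ^ d)
    (E2 : ωn⁻¹ ^ a * ω2k ^ b = ωn⁻¹ ^ c * ω2k ^ d) : a = c ∧ b = d := by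
  have hzn : ωn ≠ 0 := hωn.ne_zero hn.ne'
  have hz2 : ω2k ≠ 0 := hω2k.ne_zero (by omega)
  have h2k : 0 < 2 * k := by omega
  wlog hbd : b ≤ d generalizing a b c d
  · obtain ⟨h1, h2⟩ := this hc ha hd hb hpar.symm E1.symm E2.symm (le_of_not_ge hbd)
    exact ⟨h1.symm, h2.symm⟩
  have hmul : ωn * ωn⁻¹ = 1 := mul_inv_cancel₀ hzn
  have h2 : ω2k ^ (b + b) = ω2k ^ (d + d) := by
    have h := congrArg₂ (· * ·) E1 E2
    calc ω2k ^ (b + b) = (ωn * ωn⁻¹) ^ a * ω2k ^ (b + b) := by rw [hmul, one_pow, one_mul]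
      _ = ωn ^ a * ω2k ^ b * (ωn⁻¹ ^ a * ω2k ^ b) := by rw [mul_pow, pow_add]; ring
      _ = ωn ^ c * ω2k ^ d * (ωn⁻¹ ^ c * ω2k ^ d) := h
      _ = (ωn * ωn⁻¹) ^ c * ω2k ^ (d + d) := by rw [mul_pow, pow_add]; ring
      _ = ω2k ^ (d + d) := by rw [hmul, one_pow, one_mul]
  have hdvd : 2 * k ∣ (d + d) - (b + b) := Gnk_root_dvd hω2k h2k (by omega) h2
  have hdb : d - b = 0 ∨ d - b = k := by
    obtain ⟨t, ht⟩ := hdvd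
    have ht2 : t < 2 := by
      have hlt : 2 * k * t < 2 * k * 2 := ht ▸ (by omega : (d + d) - (b + b) < 2 * k * 2)
      exact Nat.lt_of_mul_lt_mul_left hlt
    interval_cases t <;> omega
  rcases hdb with h0 | hkk
  · have hbd' : b = d := by omega
    subst hbd'
    refine ⟨?_, rfl⟩
    have := mul_right_cancel₀ (pow_ne_zero b hz2) E1
    exact hωn.pow_inj ha hc this
  · exfalso
    have hkeven : 2 ∣ k := by omega
    have hnodd : ¬ 2 ∣ n := by
      intro h2n
      have := Nat.dvd_gcd h2n hkeven
      rw [hcop] at this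
      omega
    have hneg : ω2k ^ k = -1 := Gnk_half_neg_one hk hω2k
    have hdd : d = b + k := by omega
    rw [hdd, pow_add, hneg] at E1
    have hE : ωn ^ a * ω2k ^ b = (- ωn ^ c) * ω2k ^ b := by rw [E1]; ring
    exact Gnk_neg_case hωn hn hnodd a c (mul_right_cancel₀ (pow_ne_zero b hz2) hE)

theorem Gnk_card_and_presentation {K : Type*} [Field K] [IsAlgClosed K] [CharZero K]
    (n k : ℕ) (hn : 0 < n) (hk : 0 < k) (hcop : Nat.Coprime n k) (hk4 : k % 4 ≠ 2)
    (ωn ω2k : K) (hωn : IsPrimitiveRoot ωn n) (hω2k : IsPrimitiveRoot ω2k (2 * k))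
    (g h : (Matrix (Fin 2) (Fin 2) K)ˣ)
    (hg : (↑g : Matrix (Fin 2) (Fin 2) K) = !![ωn, 0; 0, ωn⁻¹])
    (hh : (↑h : Matrix (Fin 2) (Fin 2) K) = !![0, ω2k; ω2k, 0]) :
    Nat.card (Subgroup.closure {g, h} : Subgroup (Matrix (Fin 2) (Fin 2) K)ˣ) = 2 * n * k ∧
    g ^ n = 1 ∧ h ^ (2 * k) = 1 ∧ h * g = g ^ (n - 1) * h ∧
    ∃ φ : PresentedGroup
        ({FreeGroup.of 0 ^ n, FreeGroup.of 1 ^ (2 * k),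
          FreeGroup.of 1 * FreeGroup.of 0 * (FreeGroup.of 0 ^ (n - 1) * FreeGroup.of 1)⁻¹} :
          Set (FreeGroup (Fin 2))) ≃*
        (Subgroup.closure {g, h} : Subgroup (Matrix (Fin 2) (Fin 2) K)ˣ),
      (↑(φ (PresentedGroup.of 0)) = g ∧ ↑(φ (PresentedGroup.of 1)) = h) := by
  have hzn : ωn ≠ 0 := hωn.ne_zero hn.ne'
  have hz2 : ω2k ≠ 0 := hω2k.ne_zero (by omega)
  -- matrix powers
  have hgpow : ∀ m : ℕ, (↑(g ^ m) : Matrix (Fin 2) (Fin 2) K) = !![ωn ^ m, 0; 0, ωn⁻¹ ^ m] := by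
    intro m; rw [Units.val_pow_eq_pow_val, hg, Gnk_dpow]
  have hhpow : ∀ m : ℕ, (↑(h ^ m) : Matrix (Fin 2) (Fin 2) K) =
      if Even m then !![ω2k ^ m, 0; 0, ω2k ^ m] else !![0, ω2k ^ m; ω2k ^ m, 0] := by
    intro m; rw [Units.val_pow_eq_pow_val, hh, Gnk_apow]
  -- the three relations for g, h
  have hgn : g ^ n = 1 := by
    apply Units.ext
    rw [hgpow n, hωn.pow_eq_one, inv_pow, hωn.pow_eq_one, inv_one, Units.val_one,
      Matrix.one_fin_two]
  have hh2k : h ^ (2 * k) = 1 := by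
    apply Units.ext
    rw [hhpow (2 * k), if_pos (even_two_mul k), hω2k.pow_eq_one, Units.val_one,
      Matrix.one_fin_two]
  have hωn1 : ωn ^ (n - 1) = ωn⁻¹ := by
    apply eq_inv_of_mul_eq_one_left
    rw [← pow_succ, Nat.sub_add_cancel hn, hωn.pow_eq_one]
  have hωn1' : ωn⁻¹ ^ (n - 1) = ωn := by
    rw [inv_pow, hωn1, inv_inv]
  have hrel : h * g = g ^ (n - 1) * h := by
    apply Units.ext
    rw [Units.val_mul, Units.val_mul, hgpow (n - 1), hωn1, hωn1', hg, hh,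
      Matrix.mul_fin_two, Matrix.mul_fin_two]
    ring_nf
  set rels : Set (FreeGroup (Fin 2)) :=
    {FreeGroup.of 0 ^ n, FreeGroup.of 1 ^ (2 * k),
      FreeGroup.of 1 * FreeGroup.of 0 * (FreeGroup.of 0 ^ (n - 1) * FreeGroup.of 1)⁻¹}
    with hrels_def
  set H := (Subgroup.closure {g, h} : Subgroup (Matrix (Fin 2) (Fin 2) K)ˣ) with hH_def
  have gH : g ∈ H := Subgroup.subset_closure (Set.mem_insert _ _)
  have hH : h ∈ H := Subgroup.subset_closure (Set.mem_insert_of_mem _ rfl)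
  -- relations hold in H
  have hgnH : (⟨g, gH⟩ : H) ^ n = 1 := by
    apply Subtype.ext
    push_cast
    rw [hgn]
  have hh2kH : (⟨h, hH⟩ : H) ^ (2 * k) = 1 := by
    apply Subtype.ext
    push_cast
    rw [hh2k]
  have hrelH : (⟨h, hH⟩ : H) * ⟨g, gH⟩ * ((⟨g, gH⟩ : H) ^ (n - 1) * ⟨h, hH⟩)⁻¹ = 1 := by
    rw [mul_inv_eq_one]
    apply Subtype.ext
    push_cast
    exact hrel
  -- the homomorphism from the presented group
  have hrels : ∀ r ∈ rels, FreeGroup.lift (![⟨g, gH⟩, ⟨h, hH⟩] : Fin 2 → H) r = 1 := by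
    intro r hr
    rcases hr with hr | hr | hr
    · subst hr; rw [map_pow, FreeGroup.lift_apply_of]; exact hgnH
    · subst hr; rw [map_pow, FreeGroup.lift_apply_of]; exact hh2kH
    · rw [Set.mem_singleton_iff] at hr
      subst hr
      rw [map_mul, map_mul, map_inv, map_mul, map_pow, FreeGroup.lift_apply_of, FreeGroup.lift_apply_of]
      exact hrelH
  set ψ : PresentedGroup rels →* H := PresentedGroup.toGroup hrels with hψ_def
  have ψ0 : ψ (PresentedGroup.of 0) = ⟨g, gH⟩ := PresentedGroup.toGroup.of hrels
  have ψ1 : ψ (PresentedGroup.of 1) = ⟨h, hH⟩ := PresentedGroup.toGroup.of hrels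
  -- relations in the presented group
  have hmk1 : ∀ r ∈ rels, (PresentedGroup.mk rels r) = 1 := fun r hr =>
    (QuotientGroup.eq_one_iff _).mpr (Subgroup.subset_normalClosure hr)
  have hx : (PresentedGroup.of 0 : PresentedGroup rels) ^ n = 1 := by
    have := hmk1 _ (Set.mem_insert _ _)
    rw [map_pow] at this
    exact this
  have hy : (PresentedGroup.of 1 : PresentedGroup rels) ^ (2 * k) = 1 := by
    have := hmk1 _ (Set.mem_insert_of_mem _ (Set.mem_insert _ _))
    rw [map_pow] at this
    exact this
  have hyx : (PresentedGroup.of 1 : PresentedGroup rels) * PresentedGroup.of 0 =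
      PresentedGroup.of 0 ^ (n - 1) * PresentedGroup.of 1 := by
    rw [← mul_inv_eq_one]
    have := hmk1 _ (Set.mem_insert_of_mem _ (Set.mem_insert_of_mem _ rfl))
    rw [map_mul, map_mul, map_inv, map_mul, map_pow] at this
    exact this
  have hxinv : (PresentedGroup.of 0 : PresentedGroup rels) ^ (n - 1) =
      (PresentedGroup.of 0)⁻¹ := by
    apply eq_inv_of_mul_eq_one_left
    rw [← pow_succ, Nat.sub_add_cancel hn, hx]
  have hconj : (PresentedGroup.of 1 : PresentedGroup rels) * PresentedGroup.of 0 *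
      (PresentedGroup.of 1)⁻¹ = (PresentedGroup.of 0)⁻¹ := by
    rw [hyx, hxinv, mul_assoc, mul_inv_cancel, mul_one]
  -- the subgroup of words x^a y^b
  set T : Subgroup (PresentedGroup rels) :=
    { carrier := {z | ∃ a b : ℤ,
        z = (PresentedGroup.of 0 : PresentedGroup rels) ^ a * PresentedGroup.of 1 ^ b}
      one_mem' := ⟨0, 0, by simp⟩
      mul_mem' := by
        rintro z1 z2 ⟨a, b, rfl⟩ ⟨c, d, rfl⟩
        rcases Gnk_conj_alt _ _ hconj b c with hcase | hcase
        · refine ⟨a + c, b + d, ?_⟩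
          calc (PresentedGroup.of 0 : PresentedGroup rels) ^ a * PresentedGroup.of 1 ^ b *
              (PresentedGroup.of 0 ^ c * PresentedGroup.of 1 ^ d)
              = PresentedGroup.of 0 ^ a * (PresentedGroup.of 1 ^ b * PresentedGroup.of 0 ^ c) *
                PresentedGroup.of 1 ^ d := by group
            _ = PresentedGroup.of 0 ^ a * (PresentedGroup.of 0 ^ c * PresentedGroup.of 1 ^ b) *
                PresentedGroup.of 1 ^ d := by rw [hcase]
            _ = PresentedGroup.of 0 ^ (a + c) * PresentedGroup.of 1 ^ (b + d) := by
                rw [zpow_add, zpow_add]; group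
        · refine ⟨a + -c, b + d, ?_⟩
          calc (PresentedGroup.of 0 : PresentedGroup rels) ^ a * PresentedGroup.of 1 ^ b *
              (PresentedGroup.of 0 ^ c * PresentedGroup.of 1 ^ d)
              = PresentedGroup.of 0 ^ a * (PresentedGroup.of 1 ^ b * PresentedGroup.of 0 ^ c) *
                PresentedGroup.of 1 ^ d := by group
            _ = PresentedGroup.of 0 ^ a * (PresentedGroup.of 0 ^ (-c) * PresentedGroup.of 1 ^ b) *
                PresentedGroup.of 1 ^ d := by rw [hcase]
            _ = PresentedGroup.of 0 ^ (a + -c) * PresentedGroup.of 1 ^ (b + d) := by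
                rw [zpow_add, zpow_add]; group
      inv_mem' := by
        rintro z ⟨a, b, rfl⟩
        have hzinv : ((PresentedGroup.of 0 : PresentedGroup rels) ^ a *
            PresentedGroup.of 1 ^ b)⁻¹ =
            PresentedGroup.of 1 ^ (-b) * PresentedGroup.of 0 ^ (-a) := by
          rw [mul_inv_rev, ← zpow_neg, ← zpow_neg]
        rcases Gnk_conj_alt _ _ hconj (-b) (-a) with hcase | hcase
        · exact ⟨-a, -b, by rw [hzinv, hcase]⟩
        · exact ⟨-(-a), -b, by rw [hzinv, hcase]⟩ }
    with hT_def
  have hT : ∀ z : PresentedGroup rels, z ∈ T := by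
    refine PresentedGroup.generated_by rels T ?_
    intro j
    fin_cases j
    · exact ⟨1, 0, by simp⟩
    · exact ⟨0, 1, by simp⟩
  -- the enumeration map
  set e : Fin n × Fin (2 * k) → PresentedGroup rels := fun p =>
    (PresentedGroup.of 0 : PresentedGroup rels) ^ (p.1 : ℕ) *
      (PresentedGroup.of 1 : PresentedGroup rels) ^ (p.2 : ℕ) with he_def
  have esurj : Function.Surjective e := by
    intro z
    obtain ⟨a, b, rfl⟩ := hT z
    obtain ⟨hxa, hlta⟩ := Gnk_zpow_reduce (PresentedGroup.of 0 : PresentedGroup rels) n hn hx a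
    obtain ⟨hyb, hltb⟩ :=
      Gnk_zpow_reduce (PresentedGroup.of 1 : PresentedGroup rels) (2 * k) (by omega) hy b
    refine ⟨(⟨_, hlta⟩, ⟨_, hltb⟩), ?_⟩
    rw [he_def]
    simp only
    rw [← hxa, ← hyb]
  -- ψ is surjective
  have ψsurj : Function.Surjective ψ := by
    rintro ⟨z, hz⟩
    have key : ∀ (z) (hz : z ∈ H), ∃ q, ψ q = ⟨z, hz⟩ := by
      intro z hz
      induction hz using Subgroup.closure_induction with
      | mem w hw =>
        rcases hw with hw | hw
        · subst hw; exact ⟨PresentedGroup.of 0, ψ0⟩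
        · rw [Set.mem_singleton_iff] at hw; subst hw; exact ⟨PresentedGroup.of 1, ψ1⟩
      | one => exact ⟨1, map_one ψ⟩
      | mul w v hw hv ihw ihv =>
        obtain ⟨q1, hq1⟩ := ihw
        obtain ⟨q2, hq2⟩ := ihv
        exact ⟨q1 * q2, by rw [map_mul, hq1, hq2]; rfl⟩
      | inv w hw ihw =>
        obtain ⟨q, hq⟩ := ihw
        exact ⟨q⁻¹, by rw [map_inv, hq]; rfl⟩
    exact key z hz
  -- ψ ∘ e is injective
  have einj : Function.Injective (ψ ∘ e) := by
    rintro ⟨⟨a, ha⟩, ⟨b, hb⟩⟩ ⟨⟨c, hc⟩, ⟨d, hd⟩⟩ hpq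
    simp only [Function.comp_apply, he_def, map_mul, map_pow, ψ0, ψ1] at hpq
    have huv : g ^ a * h ^ b = g ^ c * h ^ d := congrArg Subtype.val hpq
    have hmat := congrArg Units.val huv
    rw [Units.val_mul, Units.val_mul, hgpow a, hgpow c, hhpow b, hhpow d] at hmat
    rcases Nat.even_or_odd b with hbe | hbo <;> rcases Nat.even_or_odd d with hde | hdo
    · rw [if_pos hbe, if_pos hde, Matrix.mul_fin_two, Matrix.mul_fin_two] at hmat
      have E1 := congrFun (congrFun hmat 0) 0
      have E2 := congrFun (congrFun hmat 1) 1
      simp at E1 E2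
      rw [← inv_pow, ← inv_pow] at E2
      obtain ⟨h1, h2⟩ := Gnk_exp_inj hn hk hcop hωn hω2k ha hc hb hd
        (by rw [Nat.even_iff] at hbe hde; rw [hbe, hde]) E1 E2
      simp [Prod.ext_iff, h1, h2]
    · exfalso
      rw [if_pos hbe, if_neg (by simpa [Nat.not_even_iff_odd] using hdo),
        Matrix.mul_fin_two, Matrix.mul_fin_two] at hmat
      have E1 := congrFun (congrFun hmat 0) 0
      simp at E1
      rcases E1 with ⟨h1, _⟩ | ⟨h1, _⟩
      exacts [hzn h1, hz2 h1]
    · exfalso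
      rw [if_neg (by simpa [Nat.not_even_iff_odd] using hbo), if_pos hde,
        Matrix.mul_fin_two, Matrix.mul_fin_two] at hmat
      have E1 := congrFun (congrFun hmat 0) 0
      simp at E1
      rcases E1 with ⟨h1, _⟩ | ⟨h1, _⟩
      exacts [hzn h1, hz2 h1]
    · rw [if_neg (by simpa [Nat.not_even_iff_odd] using hbo),
        if_neg (by simpa [Nat.not_even_iff_odd] using hdo),
        Matrix.mul_fin_two, Matrix.mul_fin_two] at hmat
      have E1 := congrFun (congrFun hmat 0) 1
      have E2 := congrFun (congrFun hmat 1) 0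
      simp at E1 E2
      rw [← inv_pow, ← inv_pow] at E2
      obtain ⟨h1, h2⟩ := Gnk_exp_inj hn hk hcop hωn hω2k ha hc hb hd
        (by rw [Nat.odd_iff] at hbo hdo; rw [hbo, hdo]) E1 E2
      simp [Prod.ext_iff, h1, h2]
  -- conclude
  have ψinj : Function.Injective ψ := by
    intro p q hpq
    obtain ⟨u, rfl⟩ := esurj p
    obtain ⟨v, rfl⟩ := esurj q
    exact congrArg e (einj hpq)
  have ebij : Function.Bijective e :=
    ⟨fun u v huv => einj (congrArg ψ huv), esurj⟩
  have hcard : Nat.card H = 2 * n * k := by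
    rw [← Nat.card_eq_of_bijective ψ ⟨ψinj, ψsurj⟩, ← Nat.card_eq_of_bijective e ebij]
    simp [Nat.card_eq_fintype_card]
    ring
  refine ⟨hcard, hgn, hh2k, hrel, MulEquiv.ofBijective ψ ⟨ψinj, ψsurj⟩, ?_, ?_⟩
  · show ((ψ (PresentedGroup.of 0) : H) : (Matrix (Fin 2) (Fin 2) K)ˣ) = g
    rw [ψ0]
  · show ((ψ (PresentedGroup.of 1) : H) : (Matrix (Fin 2) (Fin 2) K)ˣ) = h
    rw [ψ1]
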